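/- arXiv:2209.11958 — 2 statements merged into one kernel-verified Lean document; each statement's English description precedes it below -/
import Mathlib

section
/- For a real matrix M that is strictly diagonally dominant with positive diagonal entries (M_ii > Σ_{k≠i} |M_ik| for all i), there exists a positive definite diagonal matrix Ψ and a real number η > 0 such that ΨM + Mᵀ Ψ ≥ η·Ψ (in the Loewner order). -/
open Matrix Finset

lemma psd_of_dominant {n : ℕ} (S : Matrix (Fin n) (Fin n) ℝ)
    (hsym : S.IsHermitian)
    (hdd : ∀ i, ∑ k ∈ univ.erase i, |S i k| ≤ S i i) : S.PosSemidef := by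
  refine ⟨hsym, fun x => ?_⟩
  have hsym' : ∀ i k, S k i = S i k := fun i k => by
    have := congrFun (congrFun hsym.eq i) k
    simpa [Matrix.conjTranspose_apply] using this
  have expand : dotProduct (star x) (S *ᵥ x)
      = ∑ i, (S i i * x i ^ 2 + ∑ k ∈ univ.erase i, x i * (S i k * x k)) := by
    simp only [dotProduct, Matrix.mulVec, dotProduct, star_trivial]
    refine Finset.sum_congr rfl fun i _ => ?_
    rw [Finset.mul_sum, ← Finset.add_sum_erase (univ) (fun k => x i * (S i k * x k)) (mem_univ i)]
    ring
  have hconv : (x.sum fun i xi => x.sum fun j xj => star xi * S i j * xj)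
      = dotProduct (star ⇑x) (S *ᵥ ⇑x) := by
    simp [Finsupp.sum_fintype, dotProduct, Matrix.mulVec, Finset.mul_sum, mul_assoc]
  rw [hconv, expand]
  have hterm : ∀ i, ∀ k, -( |S i k| * (x i ^ 2 + x k ^ 2) / 2) ≤ x i * (S i k * x k) := by
    intro i k
    nlinarith [neg_abs_le (x i * (S i k * x k)), abs_mul (x i) (S i k * x k),
      abs_mul (S i k) (x k), sq_nonneg (|x i| - |x k|), abs_nonneg (S i k),
      sq_abs (x i), sq_abs (x k), abs_nonneg (x i), abs_nonneg (x k),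
      mul_nonneg (abs_nonneg (x i)) (abs_nonneg (x k))]
  have step1 : ∑ i, (S i i * x i ^ 2 - ∑ k ∈ univ.erase i, |S i k| * (x i ^ 2 + x k ^ 2) / 2)
      ≤ ∑ i, (S i i * x i ^ 2 + ∑ k ∈ univ.erase i, x i * (S i k * x k)) := by
    refine Finset.sum_le_sum fun i _ => ?_
    have : -∑ k ∈ univ.erase i, |S i k| * (x i ^ 2 + x k ^ 2) / 2
        ≤ ∑ k ∈ univ.erase i, x i * (S i k * x k) := by
      rw [← Finset.sum_neg_distrib]
      exact Finset.sum_le_sum fun k _ => hterm i k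
    linarith
  refine le_trans ?_ step1
  have swap : ∑ i, ∑ k ∈ univ.erase i, |S i k| * x k ^ 2
      = ∑ i, ∑ k ∈ univ.erase i, |S i k| * x i ^ 2 := by
    rw [Finset.sum_comm' (s' := fun k => univ.erase k) (t' := univ)
      (by intro a b; simp [Finset.mem_erase, eq_comm, and_comm])]
    refine Finset.sum_congr rfl fun i _ => Finset.sum_congr rfl fun k _ => ?_
    rw [hsym' i k]
  have h1 : ∀ i, ∑ k ∈ univ.erase i, |S i k| * (x i ^ 2 + x k ^ 2) / 2
      = (∑ k ∈ univ.erase i, |S i k| * x i ^ 2) / 2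
        + (∑ k ∈ univ.erase i, |S i k| * x k ^ 2) / 2 := by
    intro i
    rw [← add_div, ← Finset.sum_add_distrib, Finset.sum_div]
    exact Finset.sum_congr rfl fun k _ => by ring
  have key : ∑ i, (S i i * x i ^ 2 - ∑ k ∈ univ.erase i, |S i k| * (x i ^ 2 + x k ^ 2) / 2)
      = ∑ i, (S i i - ∑ k ∈ univ.erase i, |S i k|) * x i ^ 2 := by
    simp only [h1, Finset.sum_sub_distrib, Finset.sum_add_distrib, ← Finset.sum_div, swap,
      sub_mul, Finset.sum_mul]
    ring
  rw [key]
  exact Finset.sum_nonneg fun i _ => mul_nonneg (by linarith [hdd i]) (sq_nonneg _)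


lemma exists_weights {n : ℕ} (M : Matrix (Fin n) (Fin n) ℝ)
    (hdom : ∀ i, ∑ k ∈ univ.erase i, |M i k| < M i i) :
    ∃ ψ : Fin n → ℝ, (∀ i, 0 < ψ i) ∧
      ∀ i, ∑ k ∈ univ.erase i, |M k i| * ψ k ≤ M i i * ψ i := by
  rcases Nat.eq_zero_or_pos n with hn | hn
  · subst hn
    exact ⟨fun _ => 1, fun i => i.elim0, fun i => i.elim0⟩
  haveI : Nonempty (Fin n) := ⟨⟨0, hn⟩⟩
  have hMpos : ∀ i, 0 < M i i := fun i =>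
    lt_of_le_of_lt (Finset.sum_nonneg fun k _ => abs_nonneg _) (hdom i)
  set P : Fin n → Fin n → ℝ := fun k i => if i = k then 0 else |M k i| / M k k with hP
  have hPnn : ∀ k i, 0 ≤ P k i := by
    intro k i
    by_cases h : i = k <;>
      simp [hP, h, div_nonneg (abs_nonneg _) (hMpos k).le]
  have hrow : ∀ k, ∑ i, P k i < 1 := by
    intro k
    have : ∑ i, P k i = (∑ i ∈ univ.erase k, |M k i|) / M k k := by
      rw [← Finset.add_sum_erase (univ) (P k) (mem_univ k)]
      simp only [hP, if_pos rfl, zero_add, Finset.sum_div]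
      exact Finset.sum_congr rfl fun i hi => by
        rw [if_neg (Finset.mem_erase.mp hi).1]
    rw [this, div_lt_one (hMpos k)]
    exact hdom k
  set θ : ℝ := univ.sup' (univ_nonempty) (fun k => ∑ i, P k i) with hθ
  have hθ1 : θ < 1 := (Finset.sup'_lt_iff _).mpr fun k _ => hrow k
  have hθk : ∀ k, ∑ i, P k i ≤ θ := by
    intro k
    rw [hθ]
    exact Finset.le_sup' (fun k => ∑ i, P k i) (mem_univ k)
  have hθ0 : 0 ≤ θ := by
    have k := Classical.arbitrary (Fin n)
    exact le_trans (Finset.sum_nonneg fun i _ => hPnn k i) (hθk k)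
  -- iterated weights
  set w : ℕ → Fin n → ℝ := fun m => Nat.rec (fun _ => (1:ℝ))
    (fun _ wm i => ∑ k, P k i * wm k) m with hw
  have hw0 : ∀ i, w 0 i = 1 := fun i => rfl
  have hwsucc : ∀ m i, w (m+1) i = ∑ k, P k i * w m k := fun m i => rfl
  have hwnn : ∀ m i, 0 ≤ w m i := by
    intro m
    induction m with
    | zero => intro i; rw [hw0]; norm_num
    | succ m ih =>
      intro i
      rw [hwsucc]
      exact Finset.sum_nonneg fun k _ => mul_nonneg (hPnn k i) (ih k)
  have htsum : ∀ m, ∑ i, w m i ≤ (n : ℝ) * θ ^ m := by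
    intro m
    induction m with
    | zero => simp [hw0]
    | succ m ih =>
      have : ∑ i, w (m+1) i = ∑ k, (∑ i, P k i) * w m k := by
        simp only [hwsucc]
        rw [Finset.sum_comm]
        exact Finset.sum_congr rfl fun k _ => by rw [Finset.sum_mul]
      rw [this]
      calc ∑ k, (∑ i, P k i) * w m k ≤ ∑ k, θ * w m k :=
            Finset.sum_le_sum fun k _ => mul_le_mul_of_nonneg_right (hθk k) (hwnn m k)
        _ = θ * ∑ k, w m k := by rw [Finset.mul_sum]
        _ ≤ θ * ((n:ℝ) * θ ^ m) := mul_le_mul_of_nonneg_left ih hθ0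
        _ = (n:ℝ) * θ ^ (m+1) := by ring
  have hwle : ∀ m i, w m i ≤ (n:ℝ) * θ ^ m := by
    intro m i
    refine le_trans ?_ (htsum m)
    exact Finset.single_le_sum (fun k _ => hwnn m k) (mem_univ i)
  -- choose K
  obtain ⟨K, hK⟩ : ∃ K, θ ^ K < 1 / (n:ℝ) := by
    refine exists_pow_lt_of_lt_one ?_ hθ1
    positivity
  have hnK : (n:ℝ) * θ ^ (K+1) ≤ 1 := by
    have hnpos : (0:ℝ) < n := by exact_mod_cast hn
    have h2 : θ ^ (K+1) ≤ θ ^ K := by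
      rw [pow_succ]
      nlinarith [pow_nonneg hθ0 K]
    have h3 : (n:ℝ) * θ ^ K < (n:ℝ) * (1 / (n:ℝ)) := mul_lt_mul_of_pos_left hK hnpos
    have h4 : (n:ℝ) * (1 / (n:ℝ)) = 1 := by field_simp
    have h5 : (n:ℝ) * θ ^ (K+1) ≤ (n:ℝ) * θ ^ K := mul_le_mul_of_nonneg_left h2 hnpos.le
    linarith
  set z : Fin n → ℝ := fun i => ∑ m ∈ Finset.range (K+1), w m i with hz
  have hz1 : ∀ i, 1 ≤ z i := by
    intro i
    rw [hz]
    calc (1:ℝ) = w 0 i := (hw0 i).symm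
      _ ≤ ∑ m ∈ Finset.range (K+1), w m i :=
        Finset.single_le_sum (fun m _ => hwnn m i) (Finset.mem_range.mpr (Nat.succ_pos K))
  have hzP : ∀ i, ∑ k, P k i * z k ≤ z i := by
    intro i
    have e1 : ∑ k, P k i * z k = ∑ m ∈ Finset.range (K+1), w (m+1) i := by
      simp only [hz, Finset.mul_sum]
      rw [Finset.sum_comm]
    have e2 : ∑ m ∈ Finset.range (K+1), w (m+1) i
        = ∑ m ∈ Finset.range (K+2), w m i - w 0 i := by
      rw [Finset.sum_range_succ' (fun m => w m i) (K+1)]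
      ring
    have e3 : ∑ m ∈ Finset.range (K+2), w m i = z i + w (K+1) i := by
      rw [hz, Finset.sum_range_succ]
    have hwK : w (K+1) i ≤ 1 := le_trans (hwle (K+1) i) hnK
    rw [e1, e2, e3, hw0]
    linarith
  -- define ψ
  refine ⟨fun i => z i / M i i, fun i => div_pos (by linarith [hz1 i]) (hMpos i), ?_⟩
  intro i
  calc ∑ k ∈ univ.erase i, |M k i| * (z k / M k k)
      = ∑ k ∈ univ.erase i, P k i * z k := by
        refine Finset.sum_congr rfl fun k hk => ?_
        have hki : ¬ i = k := fun h => (Finset.mem_erase.mp hk).1 h.symm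
        simp only [hP, if_neg hki]
        ring
    _ = ∑ k, P k i * z k := by
        rw [← Finset.add_sum_erase univ (fun k => P k i * z k) (mem_univ i)]
        have hPii : P i i = 0 := if_pos rfl
        rw [hPii]
        ring
    _ ≤ z i := hzP i
    _ = M i i * (z i / M i i) := by
        rw [mul_div_cancel₀ _ (hMpos i).ne']


open Matrix
/-- For a strictly diagonally dominant matrix with positive diagonal there is a positive
    diagonal matrix Ψ and η > 0 with ΨM + MᵀΨ ≥ ηΨ in the Loewner order. -/
theorem diag_dominant_diagonal_lyapunov
    {n : ℕ} (M : Matrix (Fin n) (Fin n) ℝ)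
    (hdom : ∀ i, ∑ k ∈ Finset.univ.erase i, |M i k| < M i i) :
    ∃ (ψ : Fin n → ℝ) (η : ℝ), (∀ i, 0 < ψ i) ∧ 0 < η ∧
      (Matrix.diagonal ψ * M + Mᵀ * Matrix.diagonal ψ
        - η • Matrix.diagonal ψ).PosSemidef := by
  obtain ⟨ψ, hψ, hcol⟩ := exists_weights M hdom
  obtain ⟨η, hηpos, hηle⟩ : ∃ η : ℝ, 0 < η ∧
      ∀ i, η ≤ M i i - ∑ k ∈ univ.erase i, |M i k| := by
    rcases Nat.eq_zero_or_pos n with h | h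
    · subst h; exact ⟨1, one_pos, fun i => i.elim0⟩
    · haveI : Nonempty (Fin n) := ⟨⟨0, h⟩⟩
      refine ⟨univ.inf' univ_nonempty (fun i => M i i - ∑ k ∈ univ.erase i, |M i k|), ?_,
        fun i => Finset.inf'_le _ (mem_univ i)⟩
      rw [Finset.lt_inf'_iff]
      exact fun i _ => by linarith [hdom i]
  set S := Matrix.diagonal ψ * M + Mᵀ * Matrix.diagonal ψ - η • Matrix.diagonal ψ with hS
  have hSentry : ∀ i k, S i k = ψ i * M i k + M k i * ψ k - η * (if i = k then ψ i else 0) := by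
    intro i k
    simp [hS, Matrix.sub_apply, Matrix.add_apply, Matrix.diagonal_mul, Matrix.mul_diagonal,
      Matrix.transpose_apply, Matrix.smul_apply, Matrix.diagonal_apply, smul_eq_mul]
  have hsym : S.IsHermitian := by
    show Sᴴ = S
    ext i k
    rw [Matrix.conjTranspose_apply, star_trivial, hSentry, hSentry]
    by_cases h : i = k
    · subst h; ring
    · rw [if_neg h, if_neg (fun hh => h hh.symm)]; ring
  refine ⟨ψ, η, hψ, hηpos, psd_of_dominant S hsym ?_⟩
  intro i
  have hSii : S i i = ψ i * M i i + M i i * ψ i - η * ψ i := by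
    rw [hSentry, if_pos rfl]
  have hbound : ∀ k, k ∈ univ.erase i → |S i k| ≤ ψ i * |M i k| + |M k i| * ψ k := by
    intro k hk
    have hki : ¬ i = k := fun h => (Finset.mem_erase.mp hk).1 h.symm
    rw [hSentry, if_neg hki]
    calc |ψ i * M i k + M k i * ψ k - η * 0| ≤ |ψ i * M i k| + |M k i * ψ k| := by
          rw [mul_zero, sub_zero]; exact abs_add_le _ _
      _ = ψ i * |M i k| + |M k i| * ψ k := by
          rw [abs_mul, abs_mul, abs_of_pos (hψ i), abs_of_pos (hψ k)]
  calc ∑ k ∈ univ.erase i, |S i k|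
      ≤ ∑ k ∈ univ.erase i, (ψ i * |M i k| + |M k i| * ψ k) := Finset.sum_le_sum hbound
    _ = ψ i * (∑ k ∈ univ.erase i, |M i k|) + ∑ k ∈ univ.erase i, |M k i| * ψ k := by
        rw [Finset.sum_add_distrib, Finset.mul_sum]
    _ ≤ ψ i * (M i i - η) + M i i * ψ i := by
        have h1 : ψ i * (∑ k ∈ univ.erase i, |M i k|) ≤ ψ i * (M i i - η) :=
          mul_le_mul_of_nonneg_left (by linarith [hηle i]) (hψ i).le
        linarith [hcol i]
    _ = S i i := by rw [hSii]; ring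
end

section
/- If M is strictly diagonally dominant with positive diagonal and nonpositive off-diagonal entries (an M-matrix), then M⁻¹ has all nonnegative entries; consequently each vector M⁻¹ B_oj 1_m has nonnegative entries, and together with the row-sum-one property, the point Σ_j (M⁻¹ B_oj 1_m)_i · x_j is a convex combination of the leader states {x_{m+1},…,x_N} for each i. -/
/-- Monotone positivity lemma for strictly diagonally dominant matrices with
nonpositive off-diagonal entries: `M y ≥ 0` implies `y ≥ 0`. -/
lemma mmatrix_mulVec_nonneg {m : ℕ} (M : Matrix (Fin m) (Fin m) ℝ)
    (hoff : ∀ i k, k ≠ i → M i k ≤ 0)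
    (hdom : ∀ i, ∑ k ∈ Finset.univ.erase i, |M i k| < M i i)
    (y : Fin m → ℝ) (hy : ∀ i, 0 ≤ M.mulVec y i) : ∀ i, 0 ≤ y i := by
  by_contra h
  push_neg at h
  obtain ⟨i, hi⟩ := h
  obtain ⟨i0, -, hmin⟩ := Finset.exists_min_image Finset.univ y ⟨i, Finset.mem_univ i⟩
  have hy0 : y i0 < 0 := lt_of_le_of_lt (hmin i (Finset.mem_univ i)) hi
  have hrow : M.mulVec y i0 < 0 := by
    have hsplit : M.mulVec y i0 =
        M i0 i0 * y i0 + ∑ k ∈ Finset.univ.erase i0, M i0 k * y k := by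
      rw [Matrix.mulVec, dotProduct,
        ← Finset.add_sum_erase Finset.univ _ (Finset.mem_univ i0)]
    have hterm : ∀ k ∈ Finset.univ.erase i0, M i0 k * y k ≤ M i0 k * y i0 := by
      intro k hk
      exact mul_le_mul_of_nonpos_left (hmin k (Finset.mem_univ k))
        (hoff i0 k (Finset.ne_of_mem_erase hk))
    have h1 : M.mulVec y i0 ≤ M i0 i0 * y i0 + (∑ k ∈ Finset.univ.erase i0, M i0 k) * y i0 := by
      rw [hsplit, Finset.sum_mul]
      exact add_le_add_right (Finset.sum_le_sum hterm) _
    have habs : ∑ k ∈ Finset.univ.erase i0, M i0 k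
        = -∑ k ∈ Finset.univ.erase i0, |M i0 k| := by
      rw [← Finset.sum_neg_distrib]
      refine Finset.sum_congr rfl fun k hk => ?_
      rw [abs_of_nonpos (hoff i0 k (Finset.ne_of_mem_erase hk)), neg_neg]
    have h2 : M i0 i0 * y i0 + (∑ k ∈ Finset.univ.erase i0, M i0 k) * y i0
        = (M i0 i0 - ∑ k ∈ Finset.univ.erase i0, |M i0 k|) * y i0 := by
      rw [habs]; ring
    calc M.mulVec y i0 ≤ _ := h1
      _ = _ := h2
      _ < 0 := mul_neg_of_pos_of_neg (by linarith [hdom i0]) hy0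
  exact absurd (hy i0) (not_le.mpr hrow)

/-- An M-matrix has entrywise nonnegative inverse; consequently the vectors
    M⁻¹ B_oj 1 give convex-combination coefficients of the leader states. -/
theorem m_matrix_inverse_nonneg_convex_combination
    {m r n : ℕ} (LF : Matrix (Fin m) (Fin m) ℝ)
    (hLFoff : ∀ i k, k ≠ i → LF i k ≤ 0)
    (hLFrow : LF.mulVec (fun _ => 1) = 0)
    (b : Fin r → Fin m → ℝ) (hb : ∀ j i, 0 ≤ b j i)
    (M : Matrix (Fin m) (Fin m) ℝ)
    (hM : M = LF + ∑ j, Matrix.diagonal (b j))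
    (hdom : ∀ i, ∑ k ∈ Finset.univ.erase i, |M i k| < M i i)
    (x : Fin r → Fin n → ℝ) :
    (∀ i k, 0 ≤ M⁻¹ i k) ∧
    (∀ i, (∀ j, 0 ≤ M⁻¹.mulVec ((Matrix.diagonal (b j)).mulVec (fun _ => 1)) i) ∧
      ∑ j, M⁻¹.mulVec ((Matrix.diagonal (b j)).mulVec (fun _ => 1)) i = 1 ∧
      (∑ j, M⁻¹.mulVec ((Matrix.diagonal (b j)).mulVec (fun _ => 1)) i • x j)
        ∈ convexHull ℝ (Set.range x)) := by
  -- off-diagonal entries of M are nonpositive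
  have hMoff : ∀ i k, k ≠ i → M i k ≤ 0 := by
    intro i k hk
    have : M i k = LF i k := by
      simp [hM, Matrix.add_apply, Matrix.sum_apply, Matrix.diagonal_apply_ne _ (Ne.symm hk)]
    rw [this]; exact hLFoff i k hk
  -- M is invertible
  have hdet : IsUnit M.det := by
    rw [isUnit_iff_ne_zero]
    intro hdet0
    obtain ⟨v, hv0, hv⟩ := (Matrix.exists_mulVec_eq_zero_iff).mpr hdet0
    have h1 : ∀ i, 0 ≤ v i := mmatrix_mulVec_nonneg M hMoff hdom v (by simp [hv])
    have h2 : ∀ i, 0 ≤ -v i := mmatrix_mulVec_nonneg M hMoff hdom (-v) (by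
      intro i; rw [Matrix.mulVec_neg, hv]; simp)
    exact hv0 (funext fun i => le_antisymm (by simpa using h2 i) (h1 i))
  have hinvM : M⁻¹ * M = 1 := Matrix.nonsing_inv_mul M hdet
  have hMinv : M * M⁻¹ = 1 := Matrix.mul_nonsing_inv M hdet
  -- M⁻¹ is entrywise nonnegative
  have hinv_nonneg : ∀ i k, 0 ≤ M⁻¹ i k := by
    intro i k
    refine mmatrix_mulVec_nonneg M hMoff hdom (fun j => M⁻¹ j k) ?_ i
    intro i'
    have h : M.mulVec (fun j => M⁻¹ j k) i' = (M * M⁻¹) i' k := by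
      simp [Matrix.mulVec, dotProduct, Matrix.mul_apply]
    rw [h, hMinv]
    by_cases hik : i' = k <;> simp [Matrix.one_apply, hik]
  -- the coefficient vectors
  have hdiag : ∀ j, (Matrix.diagonal (b j)).mulVec (fun _ => 1) = b j := by
    intro j; funext k; simp [Matrix.mulVec_diagonal]
  have hc_nonneg : ∀ i j, 0 ≤ M⁻¹.mulVec ((Matrix.diagonal (b j)).mulVec (fun _ => 1)) i := by
    intro i j
    rw [hdiag]
    simp only [Matrix.mulVec, dotProduct]
    exact Finset.sum_nonneg fun k _ => mul_nonneg (hinv_nonneg i k) (hb j k)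
  have hone : M.mulVec (fun _ => 1) = fun k => ∑ j, b j k := by
    funext k
    rw [hM, Matrix.add_mulVec, hLFrow]
    simp [Matrix.mulVec, dotProduct, Matrix.sum_apply, Finset.sum_mul,
      Matrix.diagonal_apply, Finset.sum_comm (γ := Fin m)]
  have hsum1 : ∀ i, ∑ j, M⁻¹.mulVec ((Matrix.diagonal (b j)).mulVec (fun _ => 1)) i = 1 := by
    intro i
    have h1 : ∑ j, M⁻¹.mulVec ((Matrix.diagonal (b j)).mulVec (fun _ => 1)) i
        = M⁻¹.mulVec (M.mulVec (fun _ => 1)) i := by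
      simp only [hdiag]
      rw [hone]
      simp only [Matrix.mulVec, dotProduct, Finset.mul_sum]
      exact Finset.sum_comm
    rw [h1, Matrix.mulVec_mulVec, hinvM, Matrix.one_mulVec]
  refine ⟨hinv_nonneg, fun i => ⟨hc_nonneg i, hsum1 i, ?_⟩⟩
  have hmem := Finset.centerMass_mem_convexHull (Finset.univ)
    (fun j _ => hc_nonneg i j) (by rw [hsum1 i]; norm_num)
    (fun j _ => Set.mem_range_self (f := x) j)
  rwa [Finset.centerMass, hsum1 i, inv_one, one_smul] at hmem
end
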